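/- Let y > 0 and let f be twice differentiable at y with f(y) ≥ 0. Then |N[f](y)| ≤ (3/y³)·(|f(y)| + |y·f'(y)| + |y²·f''(y)|)². -/

import Mathlib

/-- The nonlinear operator
`N[f](y) = −3 f(y)²/(y²(y+f(y))) − ((2+f'(y))/(1+(1+f'(y))²)) f'(y) f''(y)`. -/
noncomputable def Nop (f : ℝ → ℝ) (y : ℝ) : ℝ :=
  -3 * (f y) ^ 2 / (y ^ 2 * (y + f y))
    - ((2 + deriv f y) / (1 + (1 + deriv f y) ^ 2)) * deriv f y * deriv (deriv f) y

/-- If `f(y) ≥ 0` then `|N[f](y)| ≤ (3/y³) ([f]₂(y))²` where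
`[f]₂ = |f| + |y f'| + |y² f''|`. -/
theorem stmt_4 (f : ℝ → ℝ) (y : ℝ) (hy : 0 < y)
    (hdiff : DifferentiableAt ℝ f y) (hdiff2 : DifferentiableAt ℝ (deriv f) y)
    (hf : 0 ≤ f y) :
    |Nop f y| ≤ 3 / y ^ 3 * (|f y| + |y * deriv f y| + |y ^ 2 * deriv (deriv f) y|) ^ 2 := by
  set F := f y with hF
  set p := deriv f y with hp
  set s := deriv (deriv f) y with hs
  have hy3 : (0:ℝ) < y ^ 3 := by positivity
  have hyF : 0 < y + F := by linarith
  -- bound the first term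
  have h1 : |(-3 * F ^ 2 / (y ^ 2 * (y + F)))| ≤ 3 / y ^ 3 * F ^ 2 := by
    have heq : -3 * F ^ 2 / (y ^ 2 * (y + F)) = -(3 * F ^ 2 / (y ^ 2 * (y + F))) := by ring
    rw [heq, abs_neg, abs_of_nonneg (by positivity)]
    rw [div_le_iff₀ (by positivity : (0:ℝ) < y ^ 2 * (y + F))]
    have hkey : 3 / y ^ 3 * F ^ 2 * (y ^ 2 * (y + F)) = 3 * F ^ 2 + 3 * F ^ 3 / y := by
      field_simp
    rw [hkey]
    have hF3 : 0 ≤ 3 * F ^ 3 / y := div_nonneg (by positivity) hy.le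
    linarith
  -- bound the prefactor of the second term
  have h2 : |(2 + p) / (1 + (1 + p) ^ 2)| ≤ 2 := by
    rw [abs_div, abs_of_pos (by positivity : (0:ℝ) < 1 + (1 + p) ^ 2)]
    rw [div_le_iff₀ (by positivity)]
    rcases abs_cases (2 + p) with ⟨h, _⟩ | ⟨h, _⟩ <;> rw [h] <;> nlinarith [sq_nonneg (1 + p), sq_nonneg p, sq_nonneg (2 + 2*p)]
  have h2' : |((2 + p) / (1 + (1 + p) ^ 2)) * p * s| ≤ 2 * (|p| * |s|) := by
    rw [abs_mul, abs_mul]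
    calc |(2 + p) / (1 + (1 + p) ^ 2)| * |p| * |s|
        ≤ 2 * |p| * |s| :=
          mul_le_mul_of_nonneg_right
            (mul_le_mul_of_nonneg_right h2 (abs_nonneg p)) (abs_nonneg s)
      _ = 2 * (|p| * |s|) := by ring
  have htri : |Nop f y| ≤ |(-3 * F ^ 2 / (y ^ 2 * (y + F)))| + |((2 + p) / (1 + (1 + p) ^ 2)) * p * s| := by
    unfold Nop
    exact abs_sub _ _
  have hFabs : |F| = F := abs_of_nonneg hf
  have hyp : |y * p| = y * |p| := by rw [abs_mul, abs_of_pos hy]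
  have hys : |y ^ 2 * s| = y ^ 2 * |s| := by rw [abs_mul, abs_of_pos (by positivity)]
  have hfinal : 3 / y ^ 3 * F ^ 2 + 2 * (|p| * |s|) ≤ 3 / y ^ 3 * (|F| + |y * p| + |y ^ 2 * s|) ^ 2 := by
    rw [hFabs, hyp, hys]
    have hexp : 3 / y ^ 3 * (F + y * |p| + y ^ 2 * |s|) ^ 2
        = 3 / y ^ 3 * F ^ 2 + 6 * (|p| * |s|)
          + 3 / y ^ 3 * ((y*|p|)^2 + (y^2*|s|)^2 + 2*F*(y*|p|) + 2*F*(y^2*|s|)) := by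
      field_simp; ring
    rw [hexp]
    have h0 : 0 ≤ 3 / y ^ 3 * ((y*|p|)^2 + (y^2*|s|)^2 + 2*F*(y*|p|) + 2*F*(y^2*|s|)) := by
      have := abs_nonneg p
      have := abs_nonneg s
      positivity
    have := mul_nonneg (abs_nonneg p) (abs_nonneg s)
    linarith
  calc |Nop f y| ≤ _ := htri
    _ ≤ 3 / y ^ 3 * F ^ 2 + 2 * (|p| * |s|) := by linarith
    _ ≤ _ := hfinal
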